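/- Let $P^{\uparrow}$ be the dominant of a Minkowski sum of $\{0,1\}$-polytopes $P_i = \mathrm{conv}\{\chi_S : S \in \mathcal{S}_i\}$ over a finite ground set $E$. Then every bounded edge of $P^{\uparrow}$ is parallel to a vector in $\{-1,0,1\}^E$ with at least two nonzero entries. -/

import Mathlib

open Finset Pointwise

/-- `segment ℝ u v` (with `u ≠ v`) is a (bounded) edge of `Q` when it is an extreme
subset of `Q`, i.e. a one-dimensional face. -/
def IsEdgeOf {V : Type*} [AddCommGroup V] [Module ℝ V] (Q : Set V) (u v : V) : Prop :=
  u ≠ v ∧ IsExtreme ℝ Q (segment ℝ u v)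

/-- The dominant of a set `Q ⊆ ℝ^E`: `Q + ℝ₊^E`. -/
def dominant {E : Type*} (Q : Set (E → ℝ)) : Set (E → ℝ) :=
  {x | ∃ y ∈ Q, y ≤ x}

/-- The characteristic vector of a finite set. -/
def charVec {E : Type*} [DecidableEq E] (B : Finset E) : E → ℝ :=
  fun e => if e ∈ B then 1 else 0

theorem stmt8 {E N : Type*} [Fintype E] [DecidableEq E] [Fintype N]
    (S : N → Finset (Finset E)) (hS : ∀ i, (S i).Nonempty)
    (P : N → Set (E → ℝ))
    (hP : ∀ i, P i = convexHull ℝ {x | ∃ B ∈ S i, x = charVec B}) :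
    ∀ u v : E → ℝ, IsEdgeOf (dominant (∑ i : N, P i)) u v →
      ∃ w : E → ℝ, (∀ e, w e = -1 ∨ w e = 0 ∨ w e = 1) ∧
        (∃ e f : E, e ≠ f ∧ w e ≠ 0 ∧ w f ≠ 0) ∧
        ∃ t : ℝ, t ≠ 0 ∧ v - u = t • w := by
  classical
  intro u v hedge
  obtain ⟨huv, hext⟩ := hedge
  set Pt : Set (E → ℝ) := ∑ i : N, P i with hPt
  set Q : Set (E → ℝ) := dominant Pt with hQ
  set d : E → ℝ := v - u with hd
  have hdne : d ≠ 0 := sub_ne_zero.2 huv.symm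
  -- Q is up-closed
  have hup : ∀ x ∈ Q, ∀ z : E → ℝ, 0 ≤ z → x + z ∈ Q := by
    rintro x ⟨y, hy, hyx⟩ z hz
    exact ⟨y, hy, le_trans hyx (le_add_of_nonneg_right hz)⟩
  have hPQ : Pt ⊆ Q := fun y hy => ⟨y, hy, le_rfl⟩
  have huQ : u ∈ Q := hext.1 (left_mem_segment ℝ u v)
  have hvQ : v ∈ Q := hext.1 (right_mem_segment ℝ u v)
  -- parametrization of the segment
  have hparam : ∀ x ∈ segment ℝ u v, ∃ s : ℝ, 0 ≤ s ∧ s ≤ 1 ∧ x = u + s • d := by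
    intro x hx
    rw [segment_eq_image'] at hx
    obtain ⟨s, ⟨h0, h1⟩, hs⟩ := hx
    exact ⟨s, h0, h1, hs.symm⟩
  -- the edge direction cannot be ≤ 0 nor ≥ 0
  have key : ∀ a b : E → ℝ, a ≠ b → IsExtreme ℝ Q (segment ℝ a b) → ¬ b ≤ a := by
    intro a b hab hextab hle
    have haQ : a ∈ Q := hextab.1 (left_mem_segment ℝ a b)
    have hbQ : b ∈ Q := hextab.1 (right_mem_segment ℝ a b)
    have hx₂ : a + (a - b) ∈ Q := hup a haQ _ (sub_nonneg.2 hle)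
    have hop : a ∈ openSegment ℝ b (a + (a - b)) :=
      ⟨1/2, 1/2, by norm_num, by norm_num, by norm_num, by module⟩
    have h := hextab.right_mem_of_mem_openSegment hbQ hx₂ (left_mem_segment ℝ a b) hop
    rw [segment_eq_image'] at h
    obtain ⟨θ, ⟨h0, h1⟩, hθ⟩ := h
    have h2 : θ • (b - a) = a - b := add_left_cancel hθ
    have h3 : (θ + 1) • (b - a) = 0 := by rw [add_smul, one_smul, h2]; abel
    rcases smul_eq_zero.mp h3 with h4 | h4
    · linarith
    · exact hab (sub_eq_zero.mp h4).symm
  have hpos : ∃ e, 0 < d e := by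
    by_contra h
    push_neg at h
    exact key u v huv hext (fun e => by have := h e; simp only [hd, Pi.sub_apply] at this; linarith)
  have hneg : ∃ f, d f < 0 := by
    by_contra h
    push_neg at h
    have hext' : IsExtreme ℝ Q (segment ℝ v u) := by rwa [segment_symm]
    exact key v u huv.symm hext'
      (fun e => by have := h e; simp only [hd, Pi.sub_apply] at this; linarith)
  obtain ⟨e₀, he₀⟩ := hpos
  obtain ⟨f₀, hf₀⟩ := hneg
  -- the segment lies in Pt
  have hsegP : ∀ x ∈ segment ℝ u v, x ∈ Pt := by
    intro x hx
    obtain ⟨y, hy, hyx⟩ := hext.1 hx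
    have hz : (0:E → ℝ) ≤ x - y := sub_nonneg.2 hyx
    have hy2 : y + (2:ℝ) • (x - y) ∈ Q := hup y (hPQ hy) _ (smul_nonneg (by norm_num) hz)
    have hop : x ∈ openSegment ℝ y (y + (2:ℝ) • (x - y)) :=
      ⟨1/2, 1/2, by norm_num, by norm_num, by norm_num, by module⟩
    have h := And.intro (hext.left_mem_of_mem_openSegment (hPQ hy) hy2 hx hop)
      (hext.right_mem_of_mem_openSegment (hPQ hy) hy2 hx hop)
    obtain ⟨s₁, _, _, he₁⟩ := hparam _ h.1
    obtain ⟨s₂, _, _, he₂⟩ := hparam _ h.2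
    have h2 : (2:ℝ) • (x - y) = (s₂ - s₁) • d := by
      have : y + (2:ℝ) • (x - y) - y = (u + s₂ • d) - (u + s₁ • d) := by
        rw [← he₁, ← he₂]
      rw [add_sub_cancel_left] at this
      rw [this]; module
    have hc1 : 0 ≤ s₂ - s₁ := by
      have := congrFun h2 e₀
      have hze : 0 ≤ x e₀ - y e₀ := hz e₀
      simp only [Pi.smul_apply, Pi.sub_apply, smul_eq_mul] at this
      nlinarith
    have hc2 : s₂ - s₁ ≤ 0 := by
      have := congrFun h2 f₀
      have hze : 0 ≤ x f₀ - y f₀ := hz f₀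
      simp only [Pi.smul_apply, Pi.sub_apply, smul_eq_mul] at this
      nlinarith
    have hc : s₂ - s₁ = 0 := le_antisymm hc2 hc1
    have hxy : x - y = 0 := by
      have := h2
      rw [hc, zero_smul, smul_eq_zero] at this
      rcases this with h' | h'
      · norm_num at h'
      · exact h'
    rw [sub_eq_zero] at hxy
    rwa [hxy]
  have huPt : u ∈ Pt := hsegP _ (left_mem_segment ℝ u v)
  have hvPt : v ∈ Pt := hsegP _ (right_mem_segment ℝ u v)
  have hextP : IsExtreme ℝ Pt (segment ℝ u v) :=
    ⟨fun x hx => hsegP x hx, fun x₁ h₁ x₂ h₂ x hx hop => hext.2 (hPQ h₁) (hPQ h₂) hx hop⟩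
  -- u and v are extreme points of Pt
  have huex : u ∈ Pt.extremePoints ℝ := by
    refine mem_extremePoints.2 ⟨huPt, fun x₁ h₁ x₂ h₂ hop => ?_⟩
    have hseg := And.intro (hextP.left_mem_of_mem_openSegment h₁ h₂ (left_mem_segment ℝ u v) hop)
      (hextP.right_mem_of_mem_openSegment h₁ h₂ (left_mem_segment ℝ u v) hop)
    obtain ⟨s₁, hs₁0, hs₁1, he₁⟩ := hparam _ hseg.1
    obtain ⟨s₂, hs₂0, hs₂1, he₂⟩ := hparam _ hseg.2
    obtain ⟨a, b, ha, hb, hab, habe⟩ := hop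
    have h' : a • x₁ + b • x₂ = (a+b) • u + (a*s₁ + b*s₂) • d := by rw [he₁, he₂]; module
    rw [habe, hab, one_smul] at h'
    have hz0 : (a*s₁ + b*s₂) • d = 0 := (left_eq_add.mp h')
    have hc : a*s₁ + b*s₂ = 0 := by
      rcases smul_eq_zero.mp hz0 with h' | h'
      · exact h'
      · exact absurd h' hdne
    have hn1 : 0 ≤ a * s₁ := mul_nonneg ha.le hs₁0
    have hn2 : 0 ≤ b * s₂ := mul_nonneg hb.le hs₂0
    have hs₁' : s₁ = 0 := by
      have : a * s₁ = 0 := by linarith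
      rcases mul_eq_zero.mp this with h' | h'
      · linarith
      · exact h'
    have hs₂' : s₂ = 0 := by
      have : b * s₂ = 0 := by linarith
      rcases mul_eq_zero.mp this with h' | h'
      · linarith
      · exact h'
    constructor
    · rw [he₁, hs₁', zero_smul, add_zero]
    · rw [he₂, hs₂', zero_smul, add_zero]
  have hvex : v ∈ Pt.extremePoints ℝ := by
    refine mem_extremePoints.2 ⟨hvPt, fun x₁ h₁ x₂ h₂ hop => ?_⟩
    have hseg := And.intro (hextP.left_mem_of_mem_openSegment h₁ h₂ (right_mem_segment ℝ u v) hop)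
      (hextP.right_mem_of_mem_openSegment h₁ h₂ (right_mem_segment ℝ u v) hop)
    obtain ⟨s₁, hs₁0, hs₁1, he₁⟩ := hparam _ hseg.1
    obtain ⟨s₂, hs₂0, hs₂1, he₂⟩ := hparam _ hseg.2
    obtain ⟨a, b, ha, hb, hab, habe⟩ := hop
    have h' : a • x₁ + b • x₂ = (a+b) • u + (a*s₁ + b*s₂) • d := by rw [he₁, he₂]; module
    rw [habe, hab, one_smul] at h'
    have hv1 : v = u + (1:ℝ) • d := by rw [hd]; module
    have hz0 : (a*s₁ + b*s₂ - 1) • d = 0 := by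
      have h2 : u + (1:ℝ) • d = u + (a*s₁ + b*s₂) • d := by rw [← hv1, h']
      have h3 := add_left_cancel h2
      rw [sub_smul, ← h3, sub_self]
    have hc : a*s₁ + b*s₂ = 1 := by
      rcases smul_eq_zero.mp hz0 with h' | h'
      · linarith
      · exact absurd h' hdne
    have hn1 : 0 ≤ a * (1 - s₁) := mul_nonneg ha.le (by linarith)
    have hn2 : 0 ≤ b * (1 - s₂) := mul_nonneg hb.le (by linarith)
    have hsum : a * (1 - s₁) + b * (1 - s₂) = 0 := by ring_nf; nlinarith [hc, hab]
    have hs₁' : s₁ = 1 := by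
      have : a * (1 - s₁) = 0 := by linarith
      rcases mul_eq_zero.mp this with h' | h'
      · linarith
      · linarith
    have hs₂' : s₂ = 1 := by
      have : b * (1 - s₂) = 0 := by linarith
      rcases mul_eq_zero.mp this with h' | h'
      · linarith
      · linarith
    constructor
    · rw [he₁, hs₁', ← hv1]
    · rw [he₂, hs₂', ← hv1]
  -- decompose u and v
  obtain ⟨gu, hgu, hgusum⟩ := (Set.mem_fintype_sum P u).mp (by rwa [← hPt])
  obtain ⟨gv, hgv, hgvsum⟩ := (Set.mem_fintype_sum P v).mp (by rwa [← hPt])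
  -- summation with an updated component
  have hsum_update : ∀ (g : N → (E → ℝ)) (i : N) (x : E → ℝ),
      ∑ j, Function.update g i x j = x + (∑ j, g j - g i) := by
    intro g i x
    rw [Finset.sum_update_of_mem (Finset.mem_univ i), Finset.sdiff_singleton_eq_erase,
      ← Finset.sum_erase_add Finset.univ g (Finset.mem_univ i)]
    abel
  have hmem_update : ∀ (g : N → (E → ℝ)), (∀ j, g j ∈ P j) →
      ∀ (i : N) (x : E → ℝ), x ∈ P i → x + (∑ j, g j - g i) ∈ Pt := by
    intro g hg i x hx
    rw [hPt]
    refine (Set.mem_fintype_sum P _).mpr ⟨Function.update g i x, fun j => ?_, hsum_update g i x⟩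
    rcases eq_or_ne j i with rfl | hj
    · simpa using hx
    · simpa [Function.update_of_ne hj] using hg j
  -- components of extreme points are extreme points
  have hcomp_ext : ∀ (g : N → E → ℝ), (∀ j, g j ∈ P j) →
      (∑ j, g j) ∈ Pt.extremePoints ℝ → ∀ i, g i ∈ (P i).extremePoints ℝ := by
    intro g hg hex i
    refine mem_extremePoints.2 ⟨hg i, fun x₁ h₁ x₂ h₂ hop => ?_⟩
    obtain ⟨a, b, ha, hb, hab, habe⟩ := hop
    have hu1 : x₁ + (∑ j, g j - g i) ∈ Pt := hmem_update g hg i x₁ h₁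
    have hu2 : x₂ + (∑ j, g j - g i) ∈ Pt := hmem_update g hg i x₂ h₂
    have hop2 : (∑ j, g j) ∈ openSegment ℝ (x₁ + (∑ j, g j - g i)) (x₂ + (∑ j, g j - g i)) := by
      refine ⟨a, b, ha, hb, hab, ?_⟩
      have h1 : a • (x₁ + (∑ j, g j - g i)) + b • (x₂ + (∑ j, g j - g i))
          = (a • x₁ + b • x₂) + (a + b) • (∑ j, g j - g i) := by module
      rw [h1, habe, hab, one_smul]
      abel
    have hres := (mem_extremePoints.1 hex).2 _ hu1 _ hu2 hop2
    constructor
    · have h' := hres.1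
      have : x₁ = ∑ j, g j - (∑ j, g j - g i) := eq_sub_of_add_eq h'
      simpa using this
    · have h' := hres.2
      have : x₂ = ∑ j, g j - (∑ j, g j - g i) := eq_sub_of_add_eq h'
      simpa using this
  -- each component is a characteristic vector
  have hchar : ∀ (g : N → E → ℝ), (∀ j, g j ∈ P j) →
      (∑ j, g j) ∈ Pt.extremePoints ℝ → ∀ i, ∃ B ∈ S i, g i = charVec B := by
    intro g hg hex i
    have := hcomp_ext g hg hex i
    rw [hP i] at this
    have h2 : g i ∈ {x : E → ℝ | ∃ B ∈ S i, x = charVec B} := extremePoints_convexHull_subset this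
    exact h2
  have huex' : (∑ j, gu j) ∈ Pt.extremePoints ℝ := by rwa [hgusum]
  have hvex' : (∑ j, gv j) ∈ Pt.extremePoints ℝ := by rwa [hgvsum]
  -- parallel decomposition of the edge direction
  have hpar : ∀ i, ∃ s : ℝ, 0 ≤ s ∧ s ≤ 1 ∧ gv i - gu i = (1 - s) • d := by
    intro i
    have hp : gu i + (v - gv i) ∈ Pt := by
      have := hmem_update gv hgv i (gu i) (hgu i)
      rwa [hgvsum] at this
    have hq : gv i + (u - gu i) ∈ Pt := by
      have := hmem_update gu hgu i (gv i) (hgv i)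
      rwa [hgusum] at this
    have hm : ((1:ℝ)/2) • u + ((1:ℝ)/2) • v ∈ segment ℝ u v :=
      ⟨1/2, 1/2, by norm_num, by norm_num, by norm_num, rfl⟩
    have hop : ((1:ℝ)/2) • u + ((1:ℝ)/2) • v
        ∈ openSegment ℝ (gu i + (v - gv i)) (gv i + (u - gu i)) :=
      ⟨1/2, 1/2, by norm_num, by norm_num, by norm_num, by module⟩
    have hps := And.intro (hextP.left_mem_of_mem_openSegment hp hq hm hop)
      (hextP.right_mem_of_mem_openSegment hp hq hm hop)
    obtain ⟨s, hs0, hs1, hpe⟩ := hparam _ hps.1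
    refine ⟨s, hs0, hs1, ?_⟩
    calc gv i - gu i = v - (gu i + (v - gv i)) := by abel
      _ = v - (u + s • d) := by rw [← hpe]
      _ = (1 - s) • d := by rw [hd]; module
  -- pick an index with a nonzero component difference
  obtain ⟨i, hi⟩ : ∃ i, gu i ≠ gv i := by
    by_contra h
    push_neg at h
    exact huv (by rw [← hgusum, ← hgvsum]; exact Finset.sum_congr rfl fun j _ => h j)
  obtain ⟨s, hs0, hs1, hpe⟩ := hpar i
  obtain ⟨A, hA, hgA⟩ := hchar gu hgu huex' i
  obtain ⟨B, hB, hgB⟩ := hchar gv hgv hvex' i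
  have hsne : (1:ℝ) - s ≠ 0 := by
    intro h
    apply hi
    have h0 : gv i - gu i = 0 := by rw [hpe, h, zero_smul]
    exact (sub_eq_zero.mp h0).symm
  refine ⟨gv i - gu i, ?_, ?_, (1 - s)⁻¹, inv_ne_zero hsne, ?_⟩
  · intro e
    rw [hgA, hgB]
    simp only [Pi.sub_apply, charVec]
    split_ifs <;> norm_num
  · refine ⟨e₀, f₀, ?_, ?_, ?_⟩
    · intro h; rw [h] at he₀; linarith
    · have := congrFun hpe e₀
      simp only [Pi.sub_apply, Pi.smul_apply, smul_eq_mul] at this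
      rw [Pi.sub_apply, this]
      exact mul_ne_zero hsne (ne_of_gt he₀)
    · have := congrFun hpe f₀
      simp only [Pi.sub_apply, Pi.smul_apply, smul_eq_mul] at this
      rw [Pi.sub_apply, this]
      exact mul_ne_zero hsne (ne_of_lt hf₀)
  · rw [hpe, smul_smul, inv_mul_cancel₀ hsne, one_smul]
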